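/- arXiv:1701.05911 — 3 statements merged into one kernel-verified Lean document; each statement's English description precedes it below -/
import Mathlib

section
/- (High-dimensional delta theorem, part b, ℓ₂/Frobenius version.) Let (Ω, F, P) be a probability space, let pₙ be a sequence of positive integers, m a fixed positive integer, β₀ₙ ∈ ℝ^{pₙ}, and let β̂ₙ : Ω → ℝ^{pₙ} be random vectors. Let fₙ : ℝ^{pₙ} → ℝᵐ be a family of functions that is uniformly differentiable along (β₀ₙ) with derivative matrices Dₙ (m × pₙ). Let rₙ → ∞ be positive reals and suppose the sequence rₙ‖β̂ₙ − β₀ₙ‖₂ is Oₚ(1). If ‖Dₙ‖_F → 0 as n → ∞, then rₙ‖fₙ(β̂ₙ) − fₙ(β₀ₙ)‖₂ is oₚ(1), i.e., rₙ‖fₙ(β̂ₙ) − fₙ(β₀ₙ)‖₂ → 0 in probability. -/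
open MeasureTheory Filter Finset

/-- Euclidean (ℓ₂) norm of a vector in ℝᵏ. -/
noncomputable def l2norm {k : ℕ} (v : Fin k → ℝ) : ℝ :=
  Real.sqrt (∑ i, v i ^ 2)

/-- Frobenius norm of an m × p real matrix. -/
noncomputable def frobNorm {m p : ℕ} (A : Matrix (Fin m) (Fin p) ℝ) : ℝ :=
  Real.sqrt (∑ i, ∑ j, A i j ^ 2)

lemma l2norm_nonneg {k : ℕ} (v : Fin k → ℝ) : 0 ≤ l2norm v := Real.sqrt_nonneg _

lemma l2norm_eq_zero_iff {k : ℕ} (v : Fin k → ℝ) : l2norm v = 0 ↔ ∀ i, v i = 0 := by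
  rw [l2norm, Real.sqrt_eq_zero (by positivity)]
  rw [Finset.sum_eq_zero_iff_of_nonneg (fun i _ => sq_nonneg _)]
  simp [pow_eq_zero_iff]

lemma l2norm_add_le {k : ℕ} (x y : Fin k → ℝ) :
    l2norm (fun i => x i + y i) ≤ l2norm x + l2norm y := by
  have key : ∀ v : Fin k → ℝ, l2norm v = ‖(WithLp.toLp 2 v : EuclideanSpace ℝ (Fin k))‖ := by
    intro v
    rw [EuclideanSpace.norm_eq]
    simp [l2norm, Real.norm_eq_abs, sq_abs]
  rw [key, key, key]
  exact norm_add_le (WithLp.toLp 2 x : EuclideanSpace ℝ (Fin k)) (WithLp.toLp 2 y)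

lemma l2norm_mulVec_le {m p : ℕ} (A : Matrix (Fin m) (Fin p) ℝ) (h : Fin p → ℝ) :
    l2norm (A.mulVec h) ≤ frobNorm A * l2norm h := by
  rw [l2norm, frobNorm, l2norm, ← Real.sqrt_mul (by positivity), Finset.sum_mul]
  apply Real.sqrt_le_sqrt
  apply Finset.sum_le_sum
  intro i _
  calc A.mulVec h i ^ 2 = (∑ j, A i j * h j) ^ 2 := by rfl
    _ ≤ (∑ j, A i j ^ 2) * ∑ j, h j ^ 2 := Finset.sum_mul_sq_le_sq_mul_sq _ _ _

/-- High-dimensional delta theorem, part b (ℓ₂/Frobenius version):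
if rₙ‖β̂ₙ − β₀ₙ‖₂ = Oₚ(1), fₙ is uniformly differentiable along β₀ₙ with
derivatives Dₙ, and ‖Dₙ‖_F → 0, then rₙ‖fₙ(β̂ₙ) − fₙ(β₀ₙ)‖₂ = oₚ(1). -/
theorem delta_method_high_dim_b
    {Ω : Type*} [MeasurableSpace Ω] (P : Measure Ω) [IsProbabilityMeasure P]
    (p : ℕ → ℕ) (hp : ∀ n, 0 < p n) (m : ℕ) (hm : 0 < m)
    (β₀ : ∀ n, Fin (p n) → ℝ) (βhat : ∀ n, Ω → Fin (p n) → ℝ)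
    (f : ∀ n, (Fin (p n) → ℝ) → (Fin m → ℝ))
    (D : ∀ n, Matrix (Fin m) (Fin (p n)) ℝ)
    (hdiff : ∀ ε > (0 : ℝ), ∃ δ > (0 : ℝ), ∀ n, ∀ h : Fin (p n) → ℝ,
      0 < l2norm h → l2norm h ≤ δ →
      l2norm (fun i => f n (fun j => β₀ n j + h j) i - f n (β₀ n) i
        - (D n).mulVec h i) ≤ ε * l2norm h)
    (r : ℕ → ℝ) (hr : ∀ n, 0 < r n) (hrtop : Tendsto r atTop atTop)
    (hOp : ∀ ε > (0 : ℝ), ∃ M > (0 : ℝ), ∀ n,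
      P {ω | M < r n * l2norm (fun j => βhat n ω j - β₀ n j)} ≤ ENNReal.ofReal ε)
    (hD : Tendsto (fun n => frobNorm (D n)) atTop (nhds 0)) :
    -- rₙ‖fₙ(β̂ₙ) − fₙ(β₀ₙ)‖₂ → 0 in probability
    ∀ δ > (0 : ℝ),
      Tendsto (fun n =>
        P {ω | δ < r n * l2norm (fun i => f n (βhat n ω) i - f n (β₀ n) i)})
        atTop (nhds 0) := by
  intro δ hδ
  rw [ENNReal.tendsto_atTop_zero]
  intro ε hε
  -- pick a real ε' with ofReal ε' ≤ ε
  set ε' : ℝ := (min ε 1).toReal with hε'def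
  have hε'pos : 0 < ε' := by
    apply ENNReal.toReal_pos
    · simp only [ne_eq, min_eq_iff]
      rintro (⟨h1, -⟩ | ⟨h1, -⟩) <;> simp_all
    · exact ne_top_of_le_ne_top (by simp) (min_le_right _ _)
  have hofReal : ENNReal.ofReal ε' ≤ ε := by
    rw [hε'def, ENNReal.ofReal_toReal (ne_top_of_le_ne_top (by simp) (min_le_right _ _))]
    exact min_le_left _ _
  obtain ⟨M, hM, hMbound⟩ := hOp ε' hε'pos
  obtain ⟨δ', hδ', hUD⟩ := hdiff (δ / (2 * M)) (by positivity)
  -- eventually r n ≥ M / δ' and frobNorm (D n) < δ / (2 * M)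
  have h1 : ∀ᶠ n in atTop, M / δ' ≤ r n := hrtop.eventually_ge_atTop _
  have h2 : ∀ᶠ n in atTop, frobNorm (D n) < δ / (2 * M) :=
    hD.eventually_lt_const (by positivity)
  obtain ⟨N, hN⟩ := (h1.and h2).exists_forall_of_atTop
  refine ⟨N, fun n hn => ?_⟩
  obtain ⟨hrN, hDN⟩ := hN n hn
  refine le_trans (le_trans (measure_mono ?_) (hMbound n)) hofReal
  -- set inclusion
  intro ω hω
  simp only [Set.mem_setOf_eq] at hω ⊢
  by_contra hcon
  push_neg at hcon
  apply absurd hω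
  push_neg
  set h : Fin (p n) → ℝ := fun j => βhat n ω j - β₀ n j with hdef
  have hβ : βhat n ω = fun j => β₀ n j + h j := by funext j; simp [hdef]
  rcases eq_or_lt_of_le (l2norm_nonneg h) with h0 | h0
  · -- h = 0
    have hz : βhat n ω = β₀ n := by
      funext j
      have := (l2norm_eq_zero_iff h).1 h0.symm j
      simpa [hdef, sub_eq_zero] using this
    rw [hz]
    simp only [sub_self]
    rw [show (fun _ : Fin m => (0:ℝ)) = fun i => f n (β₀ n) i - f n (β₀ n) i by simp]
    have : l2norm (fun i => f n (β₀ n) i - f n (β₀ n) i) = 0 := by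
      rw [l2norm_eq_zero_iff]; intro i; ring
    rw [this, mul_zero]
    exact hδ.le
  · -- h ≠ 0
    have hhM : r n * l2norm h ≤ M := hcon
    have hrpos := hr n
    have hsmall : l2norm h ≤ δ' := by
      have h1 : l2norm h ≤ M / r n := by
        rw [le_div_iff₀ hrpos]; linarith [hhM]
      have h2 : M / r n ≤ δ' := by
        rw [div_le_iff₀ hrpos]
        calc M = (M / δ') * δ' := by field_simp
          _ ≤ r n * δ' := by apply mul_le_mul_of_nonneg_right hrN hδ'.le
          _ = δ' * r n := mul_comm _ _
      linarith
    have hud := hUD n h h0 hsmall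
    have hDh := l2norm_mulVec_le (D n) h
    have htri : l2norm (fun i => f n (βhat n ω) i - f n (β₀ n) i) ≤
        l2norm (fun i => f n (fun j => β₀ n j + h j) i - f n (β₀ n) i - (D n).mulVec h i)
        + l2norm ((D n).mulVec h) := by
      have := l2norm_add_le
        (fun i => f n (fun j => β₀ n j + h j) i - f n (β₀ n) i - (D n).mulVec h i)
        ((D n).mulVec h)
      rw [hβ]
      convert this using 2
      funext i
      ring
    have hbound : l2norm (fun i => f n (βhat n ω) i - f n (β₀ n) i) ≤
        (δ / (2 * M) + δ / (2 * M)) * l2norm h := by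
      calc l2norm (fun i => f n (βhat n ω) i - f n (β₀ n) i)
          ≤ _ + _ := htri
        _ ≤ δ / (2 * M) * l2norm h + frobNorm (D n) * l2norm h := by
            gcongr
        _ ≤ δ / (2 * M) * l2norm h + δ / (2 * M) * l2norm h := by
            gcongr
        _ = _ := by ring
    calc r n * l2norm (fun i => f n (βhat n ω) i - f n (β₀ n) i)
        ≤ r n * ((δ / (2 * M) + δ / (2 * M)) * l2norm h) := by
          apply mul_le_mul_of_nonneg_left hbound hrpos.le
      _ = (δ / M) * (r n * l2norm h) := by ring
      _ ≤ (δ / M) * M := by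
          apply mul_le_mul_of_nonneg_left hhM (by positivity)
      _ = δ := by field_simp
end

section
/- (Delta theorem part b, ℓ₁ version.) Let (Ω, F, P) be a probability space, pₙ a sequence of positive integers, m a fixed positive integer, β₀ₙ ∈ ℝ^{pₙ}, and β̂ₙ : Ω → ℝ^{pₙ} random vectors. Let fₙ : ℝ^{pₙ} → ℝᵐ be uniformly differentiable in ℓ₁ norm along (β₀ₙ) with derivative matrices Dₙ. Let rₙ → ∞ be positive reals with rₙ‖β̂ₙ − β₀ₙ‖₁ = Oₚ(1). If the maximum column sum norm ‖Dₙ‖₁ → 0 as n → ∞, then rₙ‖fₙ(β̂ₙ) − fₙ(β₀ₙ)‖₁ → 0 in probability. -/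
open MeasureTheory Filter Finset

/-- ℓ₁ norm of a vector in ℝᵏ. -/
def l1norm {k : ℕ} (v : Fin k → ℝ) : ℝ := ∑ i, |v i|

/-- Maximum column sum matrix norm of an m × p real matrix. -/
noncomputable def maxColSumNorm {m p : ℕ} (A : Matrix (Fin m) (Fin p) ℝ) : ℝ :=
  ⨆ j, ∑ i, |A i j|

lemma l1norm_nonneg {k : ℕ} (v : Fin k → ℝ) : 0 ≤ l1norm v :=
  Finset.sum_nonneg fun i _ => abs_nonneg _

lemma mulVec_l1_le {m p : ℕ} (hp : 0 < p) (A : Matrix (Fin m) (Fin p) ℝ)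
    (h : Fin p → ℝ) : l1norm (A.mulVec h) ≤ maxColSumNorm A * l1norm h := by
  have : Nonempty (Fin p) := ⟨⟨0, hp⟩⟩
  calc l1norm (A.mulVec h) = ∑ i, |∑ j, A i j * h j| := rfl
    _ ≤ ∑ i, ∑ j, |A i j * h j| :=
        Finset.sum_le_sum fun i _ => Finset.abs_sum_le_sum_abs _ _
    _ = ∑ j, (∑ i, |A i j|) * |h j| := by
        rw [Finset.sum_comm]
        simp [abs_mul, Finset.sum_mul]
    _ ≤ ∑ j, maxColSumNorm A * |h j| := by
        refine Finset.sum_le_sum fun j _ => mul_le_mul_of_nonneg_right ?_ (abs_nonneg _)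
        exact le_ciSup (f := fun j => ∑ i, |A i j|)
          (Set.Finite.bddAbove (Set.finite_range _)) j
    _ = maxColSumNorm A * l1norm h := by rw [← Finset.mul_sum]; rfl

/-- Delta theorem part b, ℓ₁ version: if rₙ‖β̂ₙ − β₀ₙ‖₁ = Oₚ(1), fₙ is
uniformly differentiable in ℓ₁ norm along β₀ₙ with derivatives Dₙ, and the
maximum column sum norm ‖Dₙ‖₁ → 0, then rₙ‖fₙ(β̂ₙ) − fₙ(β₀ₙ)‖₁ → 0 in
probability. -/
theorem delta_method_high_dim_b_l1
    {Ω : Type*} [MeasurableSpace Ω] (P : Measure Ω) [IsProbabilityMeasure P]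
    (p : ℕ → ℕ) (hp : ∀ n, 0 < p n) (m : ℕ) (hm : 0 < m)
    (β₀ : ∀ n, Fin (p n) → ℝ) (βhat : ∀ n, Ω → Fin (p n) → ℝ)
    (f : ∀ n, (Fin (p n) → ℝ) → (Fin m → ℝ))
    (D : ∀ n, Matrix (Fin m) (Fin (p n)) ℝ)
    (hdiff : ∀ ε > (0 : ℝ), ∃ δ > (0 : ℝ), ∀ n, ∀ h : Fin (p n) → ℝ,
      0 < l1norm h → l1norm h ≤ δ →
      l1norm (fun i => f n (fun j => β₀ n j + h j) i - f n (β₀ n) i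
        - (D n).mulVec h i) ≤ ε * l1norm h)
    (r : ℕ → ℝ) (hr : ∀ n, 0 < r n) (hrtop : Tendsto r atTop atTop)
    (hOp : ∀ ε > (0 : ℝ), ∃ M > (0 : ℝ), ∀ n,
      P {ω | M < r n * l1norm (fun j => βhat n ω j - β₀ n j)} ≤ ENNReal.ofReal ε)
    (hD : Tendsto (fun n => maxColSumNorm (D n)) atTop (nhds 0)) :
    ∀ δ > (0 : ℝ),
      Tendsto (fun n =>
        P {ω | δ < r n * l1norm (fun i => f n (βhat n ω) i - f n (β₀ n) i)})
        atTop (nhds 0) := by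
  intro δ hδ
  rw [ENNReal.tendsto_nhds_zero]
  intro ε' hε'
  set e : ENNReal := min ε' 1 with he
  have he_pos : 0 < e := lt_min hε' one_pos
  have he_ne_top : e ≠ ⊤ := ne_top_of_le_ne_top ENNReal.one_ne_top (min_le_right _ _)
  have her : 0 < e.toReal := ENNReal.toReal_pos he_pos.ne' he_ne_top
  obtain ⟨M, hM, hMP⟩ := hOp e.toReal her
  have hc : (0:ℝ) < δ / (4 * M) := by positivity
  obtain ⟨δ₀, hδ₀, hd⟩ := hdiff (δ / (4 * M)) hc
  have ev1 : ∀ᶠ n in atTop, maxColSumNorm (D n) < δ / (4 * M) :=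
    hD.eventually (gt_mem_nhds hc)
  have ev2 : ∀ᶠ n in atTop, M / δ₀ ≤ r n := hrtop.eventually_ge_atTop _
  filter_upwards [ev1, ev2] with n hDn hrn
  have hsub : {ω | δ < r n * l1norm (fun i => f n (βhat n ω) i - f n (β₀ n) i)} ⊆
      {ω | M < r n * l1norm (fun j => βhat n ω j - β₀ n j)} := by
    intro ω hω
    simp only [Set.mem_setOf_eq] at hω ⊢
    by_contra hcon
    push_neg at hcon
    set h : Fin (p n) → ℝ := fun j => βhat n ω j - β₀ n j with hh
    have hβ : (fun j => β₀ n j + h j) = βhat n ω := by funext j; simp [hh]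
    rcases eq_or_lt_of_le (l1norm_nonneg h) with h0 | h0
    · -- h = 0, so βhat = β₀
      have hz : ∀ j, h j = 0 := by
        intro j
        have := Finset.sum_eq_zero_iff_of_nonneg (fun i _ => abs_nonneg (h i)) |>.1 h0.symm
        exact abs_eq_zero.1 (this j (Finset.mem_univ j))
      have : βhat n ω = β₀ n := by funext j; have := hz j; simp [hh] at this; linarith
      rw [this] at hω
      simp [l1norm] at hω
      linarith
    · have hle : l1norm h ≤ δ₀ := by
        have h1 : l1norm h ≤ M / r n := by
          rw [le_div_iff₀ (hr n)]
          linarith [hcon]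
        have h2 : M / r n ≤ δ₀ := by
          rw [div_le_iff₀ (hr n)]
          have := (div_le_iff₀ hδ₀).1 hrn
          linarith
        linarith
      have hkey := hd n h h0 hle
      have htri : l1norm (fun i => f n (βhat n ω) i - f n (β₀ n) i) ≤
          l1norm (fun i => f n (fun j => β₀ n j + h j) i - f n (β₀ n) i
            - (D n).mulVec h i) + l1norm ((D n).mulVec h) := by
        rw [hβ]
        unfold l1norm
        rw [← Finset.sum_add_distrib]
        refine Finset.sum_le_sum fun i _ => ?_
        calc |f n (βhat n ω) i - f n (β₀ n) i|
            = |(f n (βhat n ω) i - f n (β₀ n) i - (D n).mulVec h i) + (D n).mulVec h i| := by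
              ring_nf
          _ ≤ _ := abs_add_le _ _
      have hmv := mulVec_l1_le (hp n) (D n) h
      have hDh : l1norm ((D n).mulVec h) ≤ (δ / (4 * M)) * l1norm h :=
        hmv.trans (mul_le_mul_of_nonneg_right hDn.le h0.le)
      have hfin : l1norm (fun i => f n (βhat n ω) i - f n (β₀ n) i) ≤
          (δ / (2 * M)) * l1norm h := by
        have := htri.trans (add_le_add hkey hDh)
        calc l1norm (fun i => f n (βhat n ω) i - f n (β₀ n) i)
            ≤ (δ / (4 * M)) * l1norm h + (δ / (4 * M)) * l1norm h := this
          _ = (δ / (2 * M)) * l1norm h := by ring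
      have hrl : r n * l1norm h ≤ M := by linarith [hcon]
      have : r n * l1norm (fun i => f n (βhat n ω) i - f n (β₀ n) i) ≤
          (δ / (2 * M)) * (r n * l1norm h) := by
        have := mul_le_mul_of_nonneg_left hfin (hr n).le
        calc r n * l1norm (fun i => f n (βhat n ω) i - f n (β₀ n) i)
            ≤ r n * ((δ / (2 * M)) * l1norm h) := this
          _ = (δ / (2 * M)) * (r n * l1norm h) := by ring
      have hfin2 : r n * l1norm (fun i => f n (βhat n ω) i - f n (β₀ n) i) ≤ δ / 2 := by
        have h3 : (δ / (2 * M)) * (r n * l1norm h) ≤ (δ / (2 * M)) * M :=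
          mul_le_mul_of_nonneg_left hrl (by positivity)
        have h4 : (δ / (2 * M)) * M = δ / 2 := by field_simp
        linarith
      linarith
  calc P _ ≤ P {ω | M < r n * l1norm (fun j => βhat n ω j - β₀ n j)} := measure_mono hsub
    _ ≤ ENNReal.ofReal e.toReal := hMP n
    _ = e := ENNReal.ofReal_toReal he_ne_top
    _ ≤ ε' := min_le_left _ _
end

section
/- (Delta theorem part b, ℓ_∞ version.) Let (Ω, F, P) be a probability space, pₙ a sequence of positive integers, m a fixed positive integer, β₀ₙ ∈ ℝ^{pₙ}, and β̂ₙ : Ω → ℝ^{pₙ} random vectors. Let fₙ : ℝ^{pₙ} → ℝᵐ be uniformly differentiable in ℓ_∞ norm along (β₀ₙ) with derivative matrices Dₙ. Let rₙ → ∞ be positive reals with rₙ‖β̂ₙ − β₀ₙ‖_∞ = Oₚ(1). If the maximum row sum norm ‖Dₙ‖_∞ → 0 as n → ∞, then rₙ‖fₙ(β̂ₙ) − fₙ(β₀ₙ)‖_∞ → 0 in probability. -/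
open MeasureTheory Filter Finset

/-- ℓ_∞ (sup) norm of a vector in ℝᵏ. -/
noncomputable def linfNorm {k : ℕ} (v : Fin k → ℝ) : ℝ := ⨆ i, |v i|

/-- Maximum row sum matrix norm of an m × p real matrix. -/
noncomputable def maxRowSumNorm {m p : ℕ} (A : Matrix (Fin m) (Fin p) ℝ) : ℝ :=
  ⨆ i, ∑ j, |A i j|

lemma linf_le {k : ℕ} (v : Fin k → ℝ) (i : Fin k) : |v i| ≤ linfNorm v :=
  le_ciSup (f := fun i => |v i|) (Set.Finite.bddAbove (Set.finite_range _)) i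

lemma linf_nonneg {k : ℕ} (v : Fin k → ℝ) : 0 ≤ linfNorm v :=
  Real.iSup_nonneg fun _ => abs_nonneg _

lemma linf_le_of {k : ℕ} [Nonempty (Fin k)] (v : Fin k → ℝ) {c : ℝ}
    (h : ∀ i, |v i| ≤ c) : linfNorm v ≤ c := ciSup_le h

lemma rowsum_le {m p : ℕ} (A : Matrix (Fin m) (Fin p) ℝ) (i : Fin m) :
    ∑ j, |A i j| ≤ maxRowSumNorm A :=
  le_ciSup (f := fun i => ∑ j, |A i j|) (Set.Finite.bddAbove (Set.finite_range _)) i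

lemma mulVec_abs_le {m p : ℕ} (A : Matrix (Fin m) (Fin p) ℝ)
    (h : Fin p → ℝ) (i : Fin m) :
    |A.mulVec h i| ≤ maxRowSumNorm A * linfNorm h := by
  have e : A.mulVec h i = ∑ j, A i j * h j := by
    simp [Matrix.mulVec, dotProduct]
  rw [e]
  calc |∑ j, A i j * h j| ≤ ∑ j, |A i j * h j| := Finset.abs_sum_le_sum_abs _ _
    _ ≤ ∑ j, |A i j| * linfNorm h := Finset.sum_le_sum fun j _ => by
          rw [abs_mul]; exact mul_le_mul_of_nonneg_left (linf_le h j) (abs_nonneg _)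
    _ = (∑ j, |A i j|) * linfNorm h := by rw [Finset.sum_mul]
    _ ≤ maxRowSumNorm A * linfNorm h :=
        mul_le_mul_of_nonneg_right (rowsum_le A i) (linf_nonneg h)

/-- Delta theorem part b, ℓ_∞ version: if rₙ‖β̂ₙ − β₀ₙ‖_∞ = Oₚ(1), fₙ is
uniformly differentiable in ℓ_∞ norm along β₀ₙ with derivatives Dₙ, and the
maximum row sum norm ‖Dₙ‖_∞ → 0, then rₙ‖fₙ(β̂ₙ) − fₙ(β₀ₙ)‖_∞ → 0 in
probability. -/
theorem delta_method_high_dim_b_linf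
    {Ω : Type*} [MeasurableSpace Ω] (P : Measure Ω) [IsProbabilityMeasure P]
    (p : ℕ → ℕ) (hp : ∀ n, 0 < p n) (m : ℕ) (hm : 0 < m)
    (β₀ : ∀ n, Fin (p n) → ℝ) (βhat : ∀ n, Ω → Fin (p n) → ℝ)
    (f : ∀ n, (Fin (p n) → ℝ) → (Fin m → ℝ))
    (D : ∀ n, Matrix (Fin m) (Fin (p n)) ℝ)
    (hdiff : ∀ ε > (0 : ℝ), ∃ δ > (0 : ℝ), ∀ n, ∀ h : Fin (p n) → ℝ,
      0 < linfNorm h → linfNorm h ≤ δ →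
      linfNorm (fun i => f n (fun j => β₀ n j + h j) i - f n (β₀ n) i
        - (D n).mulVec h i) ≤ ε * linfNorm h)
    (r : ℕ → ℝ) (hr : ∀ n, 0 < r n) (hrtop : Tendsto r atTop atTop)
    (hOp : ∀ ε > (0 : ℝ), ∃ M > (0 : ℝ), ∀ n,
      P {ω | M < r n * linfNorm (fun j => βhat n ω j - β₀ n j)} ≤ ENNReal.ofReal ε)
    (hD : Tendsto (fun n => maxRowSumNorm (D n)) atTop (nhds 0)) :
    ∀ δ > (0 : ℝ),
      Tendsto (fun n =>
        P {ω | δ < r n * linfNorm (fun i => f n (βhat n ω) i - f n (β₀ n) i)})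
        atTop (nhds 0) := by
  intro δ hδ
  haveI : Nonempty (Fin m) := Fin.pos_iff_nonempty.mp hm
  rw [ENNReal.tendsto_atTop_zero]
  intro ε hε
  -- get a real ε bound
  set e : ℝ := (min ε 1).toReal with he
  have hemin : min ε 1 ≠ ⊤ := ne_top_of_le_ne_top (by simp) (min_le_right _ _)
  have he0 : 0 < e := ENNReal.toReal_pos (lt_min hε zero_lt_one).ne' hemin
  have heε : ENNReal.ofReal e ≤ ε := by
    rw [he, ENNReal.ofReal_toReal hemin]; exact min_le_left _ _
  obtain ⟨M, hM, hMop⟩ := hOp e he0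
  have hε₁ : (0:ℝ) < δ / (2 * M) := by positivity
  obtain ⟨δ₁, hδ₁, hrem⟩ := hdiff (δ / (2 * M)) hε₁
  have hev1 : ∀ᶠ n in atTop, M / δ₁ ≤ r n := hrtop.eventually (eventually_ge_atTop _)
  have hev2 : ∀ᶠ n in atTop, maxRowSumNorm (D n) < δ / (2 * M) :=
    hD.eventually_lt_const hε₁
  obtain ⟨N, hN⟩ := (hev1.and hev2).exists_forall_of_atTop
  refine ⟨N, fun n hn => ?_⟩
  obtain ⟨hrn, hDn⟩ := hN n hn
  refine le_trans (le_trans (measure_mono ?_) (hMop n)) heε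
  intro ω hω
  simp only [Set.mem_setOf_eq] at hω ⊢
  by_contra hc
  push_neg at hc
  set h : Fin (p n) → ℝ := fun j => βhat n ω j - β₀ n j with hh
  have hβ : (fun j => β₀ n j + h j) = βhat n ω := by
    funext j; simp [hh]
  rcases eq_or_lt_of_le (linf_nonneg h) with h0 | h0
  · -- h = 0
    have hz : ∀ j, h j = 0 := fun j =>
      abs_eq_zero.mp (le_antisymm (h0 ▸ linf_le h j) (abs_nonneg _))
    have : βhat n ω = β₀ n := by
      funext j; have := hz j; simp [hh] at this; linarith
    rw [this] at hω
    have : linfNorm (fun i => f n (β₀ n) i - f n (β₀ n) i - 0) ≤ 0 := by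
      apply linf_le_of; intro i; simp
    simp only [sub_self] at hω
    have hlz : linfNorm (fun _ : Fin m => (0:ℝ)) = 0 := by
      apply le_antisymm _ (linf_nonneg _)
      apply linf_le_of; intro i; simp
    rw [hlz, mul_zero] at hω
    linarith
  · have hle : linfNorm h ≤ δ₁ := by
      have h1 : linfNorm h ≤ M / r n :=
        (le_div_iff₀ (hr n)).mpr (by rw [mul_comm]; exact hc)
      have h2 : M / r n ≤ δ₁ := by
        rw [div_le_iff₀ (hr n)]
        have : M / δ₁ * δ₁ ≤ r n * δ₁ := mul_le_mul_of_nonneg_right hrn hδ₁.le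
        rw [div_mul_cancel₀ _ hδ₁.ne'] at this
        linarith
      linarith
    have hR := hrem n h h0 hle
    have hbound : ∀ i, |f n (βhat n ω) i - f n (β₀ n) i| ≤
        (maxRowSumNorm (D n) + δ / (2 * M)) * linfNorm h := by
      intro i
      have h1 : |f n (βhat n ω) i - f n (β₀ n) i - (D n).mulVec h i| ≤
          δ / (2 * M) * linfNorm h := by
        refine le_trans ?_ hR
        rw [← hβ]
        exact linf_le (fun i => f n (fun j => β₀ n j + h j) i - f n (β₀ n) i
          - (D n).mulVec h i) i
      have h2 := mulVec_abs_le (D n) h i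
      calc |f n (βhat n ω) i - f n (β₀ n) i|
          = |(f n (βhat n ω) i - f n (β₀ n) i - (D n).mulVec h i) + (D n).mulVec h i| := by
            ring_nf
        _ ≤ |f n (βhat n ω) i - f n (β₀ n) i - (D n).mulVec h i| + |(D n).mulVec h i| :=
            abs_add_le _ _
        _ ≤ (maxRowSumNorm (D n) + δ / (2 * M)) * linfNorm h := by nlinarith
    have hlf : linfNorm (fun i => f n (βhat n ω) i - f n (β₀ n) i) ≤
        (maxRowSumNorm (D n) + δ / (2 * M)) * linfNorm h := linf_le_of _ hbound
    have hfinal : r n * linfNorm (fun i => f n (βhat n ω) i - f n (β₀ n) i) ≤ δ := by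
      have hrh : r n * linfNorm h ≤ M := by rw [mul_comm] at hc ⊢; exact hc
      have hDnn : 0 ≤ maxRowSumNorm (D n) :=
        Real.iSup_nonneg fun i => Finset.sum_nonneg fun j _ => abs_nonneg _
      calc r n * linfNorm (fun i => f n (βhat n ω) i - f n (β₀ n) i)
          ≤ r n * ((maxRowSumNorm (D n) + δ / (2 * M)) * linfNorm h) :=
            mul_le_mul_of_nonneg_left hlf (hr n).le
        _ = (maxRowSumNorm (D n) + δ / (2 * M)) * (r n * linfNorm h) := by ring
        _ ≤ (δ / (2 * M) + δ / (2 * M)) * M := by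
            apply mul_le_mul (by linarith) hrh
              (mul_nonneg (hr n).le (linf_nonneg h)) (by positivity)
        _ = δ := by field_simp; ring
    linarith
end
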